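/- Let L : ℝ⁴↑ → ℝ satisfy the global parabolic bound with some constant C > 0, let s ∈ ℝ, and let h : ℝ → ℝ be continuous with |h(x)| ≤ a + b|x| for all x ∈ ℝ, for some constants a, b > 0. Then for every t > s and every δ > 0 there exists Y₀ > 0 such that for all y ∈ ℝ with |y| ≥ Y₀, the set of maximizers of x ↦ h(x) + L(x,s;y,t) over x ∈ ℝ is nonempty and contained in the interval (y − |y|^{1/2+δ}, y + |y|^{1/2+δ}). -/

import Mathlib

/-- `L : ℝ⁴↑ → ℝ` satisfies the global parabolic bound with constant `C`. -/
def GlobalParabolicBound (C : ℝ) (L : ℝ → ℝ → ℝ → ℝ → ℝ) : Prop :=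
  ∀ x s y t : ℝ, s < t →
    |L x s y t + (x - y) ^ 2 / (t - s)| ≤
      C * (t - s) ^ ((1 : ℝ) / 3) *
        (Real.log ((2 * Real.sqrt (x ^ 2 + y ^ 2 + s ^ 2 + t ^ 2) + 4) / min (t - s) 1)) ^ 2

private lemma aux_sqrt_sum (x y s t : ℝ) :
    Real.sqrt (x ^ 2 + y ^ 2 + s ^ 2 + t ^ 2) ≤ |x| + |y| + |s| + |t| := by
  have h1 : x ^ 2 + y ^ 2 + s ^ 2 + t ^ 2 ≤ (|x| + |y| + |s| + |t|) ^ 2 := by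
    nlinarith [sq_abs x, sq_abs y, sq_abs s, sq_abs t,
      mul_nonneg (abs_nonneg x) (abs_nonneg y), mul_nonneg (abs_nonneg x) (abs_nonneg s),
      mul_nonneg (abs_nonneg x) (abs_nonneg t), mul_nonneg (abs_nonneg y) (abs_nonneg s),
      mul_nonneg (abs_nonneg y) (abs_nonneg t), mul_nonneg (abs_nonneg s) (abs_nonneg t)]
  calc Real.sqrt (x ^ 2 + y ^ 2 + s ^ 2 + t ^ 2)
      ≤ Real.sqrt ((|x| + |y| + |s| + |t|) ^ 2) := Real.sqrt_le_sqrt h1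
    _ = |x| + |y| + |s| + |t| := Real.sqrt_sq (by positivity)

private lemma aux_logsq {A : ℝ} (hA : 4 ≤ A) : (Real.log A) ^ 2 ≤ 4 * A := by
  have hA0 : (0:ℝ) < A := by linarith
  have hg0 : 0 ≤ Real.log A := Real.log_nonneg (by linarith)
  have h1 : Real.log (Real.sqrt A) ≤ Real.sqrt A - 1 :=
    Real.log_le_sub_one_of_pos (Real.sqrt_pos.mpr hA0)
  have h2 : Real.log (Real.sqrt A) = Real.log A / 2 := Real.log_sqrt hA0.le
  have hgle : Real.log A ≤ 2 * Real.sqrt A := by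
    rw [h2] at h1; linarith [Real.sqrt_nonneg A]
  have hs := Real.sq_sqrt hA0.le
  nlinarith [Real.sqrt_nonneg A]

private lemma aux_quad {τ R S T d u : ℝ} (hτ : 0 < τ) (hR : 0 < R) (hS : 0 < S)
    (hT : 0 < T) (hu : 1 ≤ u) (hd : 0 ≤ d)
    (key : d ^ 2 ≤ τ * R + τ * S * d + τ * T * u) :
    d ≤ 2 * τ * S + Real.sqrt (2 * τ * (R + T)) * Real.sqrt u := by
  have hsu : 0 ≤ Real.sqrt u := Real.sqrt_nonneg _
  have hsc : 0 ≤ Real.sqrt (2 * τ * (R + T)) := Real.sqrt_nonneg _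
  rcases le_or_gt d (2 * τ * S) with hcase | hcase
  · nlinarith
  · have hdpos : 0 < d := lt_of_le_of_lt (by positivity) hcase
    have hmul : (2 * τ * S) * d < d * d := mul_lt_mul_of_pos_right hcase hdpos
    have hd3 : d ^ 2 ≤ 2 * τ * (R + T) * u := by
      nlinarith [mul_nonneg (mul_pos hτ hR).le (sub_nonneg.mpr hu)]
    have hsq : d ≤ Real.sqrt (2 * τ * (R + T) * u) := by
      have := Real.sqrt_le_sqrt hd3
      rwa [Real.sqrt_sq hd] at this
    rw [Real.sqrt_mul (by positivity) u] at hsq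
    nlinarith [mul_pos hτ hS]

private lemma aux_abs_sq (x y : ℝ) : (|x| - |y|) ^ 2 ≤ (x - y) ^ 2 := by
  have h1 : |(|x| - |y|)| ≤ |x - y| := abs_abs_sub_abs_le_abs_sub x y
  calc (|x| - |y|) ^ 2 = |(|x| - |y|)| ^ 2 := (sq_abs _).symm
    _ ≤ |x - y| ^ 2 := pow_le_pow_left₀ (abs_nonneg _) h1 2
    _ = (x - y) ^ 2 := sq_abs _

set_option maxHeartbeats 1600000 in
/-- Localization of maximizers: under the global parabolic bound and linear growth of
`h`, for every `t > s` and `δ > 0` there is `Y₀ > 0` such that for `|y| ≥ Y₀` the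
maximizers of `x ↦ h(x) + L(x,s;y,t)` form a nonempty set contained in
`(y − |y|^{1/2+δ}, y + |y|^{1/2+δ})`. -/
theorem stmt7 (C : ℝ) (hC : 0 < C) (L : ℝ → ℝ → ℝ → ℝ → ℝ)
    (hLcont : ContinuousOn (fun p : ℝ × ℝ × ℝ × ℝ => L p.1 p.2.1 p.2.2.1 p.2.2.2)
      {p : ℝ × ℝ × ℝ × ℝ | p.2.1 < p.2.2.2})
    (hL : GlobalParabolicBound C L)
    (s : ℝ) (a b : ℝ) (ha : 0 < a) (hb : 0 < b)
    (h : ℝ → ℝ) (hh : Continuous h) (hgrowth : ∀ x : ℝ, |h x| ≤ a + b * |x|) :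
    ∀ t : ℝ, s < t → ∀ δ : ℝ, 0 < δ → ∃ Y₀ : ℝ, 0 < Y₀ ∧
      ∀ y : ℝ, Y₀ ≤ |y| →
        {x : ℝ | ∀ w : ℝ, h w + L w s y t ≤ h x + L x s y t}.Nonempty ∧
        {x : ℝ | ∀ w : ℝ, h w + L w s y t ≤ h x + L x s y t} ⊆
          Set.Ioo (y - |y| ^ ((1 : ℝ) / 2 + δ)) (y + |y| ^ ((1 : ℝ) / 2 + δ)) := by
  intro t ht δ hδ
  obtain ⟨τ, hτdef⟩ : ∃ τ : ℝ, τ = t - s := ⟨_, rfl⟩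
  have hτ : (0:ℝ) < τ := hτdef ▸ sub_pos.mpr ht
  obtain ⟨m, hmdef⟩ : ∃ m : ℝ, m = min τ 1 := ⟨_, rfl⟩
  have hm : 0 < m := hmdef ▸ lt_min hτ one_pos
  have hm1 : m ≤ 1 := hmdef ▸ min_le_right τ 1
  have hτp : (0:ℝ) < τ ^ ((1:ℝ)/3) := Real.rpow_pos_of_pos hτ _
  obtain ⟨K, hKdef⟩ : ∃ K : ℝ, K = 4 * C * τ ^ ((1:ℝ)/3) / m := ⟨_, rfl⟩
  have hK : 0 < K := by rw [hKdef]; positivity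
  obtain ⟨P, hPdef⟩ : ∃ P : ℝ, P = K * (2 * (|s| + |t|) + 4) := ⟨_, rfl⟩
  obtain ⟨Q, hQdef⟩ : ∃ Q : ℝ, Q = 2 * K := ⟨_, rfl⟩
  have hP : 0 < P := by rw [hPdef]; positivity
  have hQ : 0 < Q := by rw [hQdef]; positivity
  -- Error bound: the parabolic error is at most linear in |x| and |y|
  have hE : ∀ x y : ℝ, |L x s y t + (x - y) ^ 2 / τ| ≤ P + Q * |x| + Q * |y| := by
    intro x y
    have hbnd := hL x s y t ht
    rw [← hτdef] at hbnd
    rw [← hmdef] at hbnd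
    have hA4 : (4:ℝ) ≤ (2 * Real.sqrt (x ^ 2 + y ^ 2 + s ^ 2 + t ^ 2) + 4) / m := by
      rw [le_div_iff₀ hm]
      nlinarith [Real.sqrt_nonneg (x ^ 2 + y ^ 2 + s ^ 2 + t ^ 2)]
    have hgsq := aux_logsq hA4
    have hsz := aux_sqrt_sum x y s t
    calc |L x s y t + (x - y) ^ 2 / τ|
        ≤ C * τ ^ ((1:ℝ)/3) *
          (Real.log ((2 * Real.sqrt (x ^ 2 + y ^ 2 + s ^ 2 + t ^ 2) + 4) / m)) ^ 2 := hbnd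
      _ ≤ C * τ ^ ((1:ℝ)/3) *
          (4 * ((2 * Real.sqrt (x ^ 2 + y ^ 2 + s ^ 2 + t ^ 2) + 4) / m)) :=
          mul_le_mul_of_nonneg_left hgsq (by positivity)
      _ = K * (2 * Real.sqrt (x ^ 2 + y ^ 2 + s ^ 2 + t ^ 2) + 4) := by
          rw [hKdef]; field_simp
      _ ≤ K * (2 * (|x| + |y| + |s| + |t|) + 4) :=
          mul_le_mul_of_nonneg_left (by linarith) hK.le
      _ = P + Q * |x| + Q * |y| := by rw [hPdef, hQdef]; ring
  obtain ⟨c2, hc2def⟩ : ∃ c2 : ℝ, c2 = Real.sqrt (2*τ*((2*a+2*P) + (2*b+4*Q))) := ⟨_, rfl⟩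
  have hc2 : 0 ≤ c2 := hc2def ▸ Real.sqrt_nonneg _
  -- any maximizer is within 2τ(b+Q) + c2·√|y| of y
  have hdist : ∀ y : ℝ, 1 ≤ |y| → ∀ x : ℝ,
      (∀ w : ℝ, h w + L w s y t ≤ h x + L x s y t) →
      |x - y| ≤ 2*τ*(b+Q) + c2 * Real.sqrt |y| := by
    intro y hy1 x hmax
    have hxy := hmax y
    have hEx := abs_le.mp (hE x y)
    have hEy := abs_le.mp (hE y y)
    have hhx := abs_le.mp (hgrowth x)
    have hhy := abs_le.mp (hgrowth y)
    have hyy : ((y:ℝ) - y) ^ 2 / τ = 0 := by simp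
    have hd0 : (0:ℝ) ≤ |x - y| := abs_nonneg _
    have hxb : |x| ≤ |y| + |x - y| := by
      have := abs_sub_abs_le_abs_sub x y; linarith
    have h1 : (x - y) ^ 2 / τ ≤ (2*a+2*P) + (b+Q)*|x| + (b+3*Q)*|y| := by
      linarith [hEx.2, hEy.1, hhx.2, hhy.1]
    rw [div_le_iff₀ hτ] at h1
    have hmul : τ*(b+Q)*|x| ≤ τ*(b+Q)*(|y| + |x - y|) :=
      mul_le_mul_of_nonneg_left hxb (by positivity)
    have key : |x - y| ^ 2 ≤ τ*(2*a+2*P) + τ*(b+Q)*|x - y| + τ*(2*b+4*Q)*|y| := by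
      have hsq := sq_abs (x - y)
      nlinarith [h1, hmul]
    have := aux_quad hτ (by positivity : (0:ℝ) < 2*a+2*P) (by positivity : (0:ℝ) < b+Q)
      (by positivity : (0:ℝ) < 2*b+4*Q) hy1 hd0 key
    rwa [← hc2def] at this
  -- choose Y₀ by the asymptotics of u^{1/2+δ}
  have htend : Filter.Tendsto (fun u : ℝ => u ^ ((1:ℝ)/2 + δ) - c2 * u ^ ((1:ℝ)/2))
      Filter.atTop Filter.atTop := by
    have h1 : Filter.Tendsto (fun u : ℝ => u ^ ((1:ℝ)/2) * (u ^ δ - c2))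
        Filter.atTop Filter.atTop := by
      apply Filter.Tendsto.atTop_mul_atTop₀ (tendsto_rpow_atTop (by norm_num))
      have := Filter.tendsto_atTop_add_const_right Filter.atTop (-c2) (tendsto_rpow_atTop hδ)
      exact this.congr (fun u => by ring)
    apply h1.congr'
    filter_upwards [Filter.eventually_gt_atTop 0] with u hu
    rw [Real.rpow_add hu]; ring
  have hev : ∀ᶠ u in Filter.atTop,
      (1:ℝ) ≤ u ∧ 2*τ*(b+Q) + c2 * u ^ ((1:ℝ)/2) < u ^ ((1:ℝ)/2 + δ) := by
    filter_upwards [Filter.eventually_ge_atTop (1:ℝ),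
      htend.eventually_ge_atTop (2*τ*(b+Q) + 1)] with u h1 h2
    exact ⟨h1, by linarith⟩
  obtain ⟨Y₀, hY₀⟩ := Filter.eventually_atTop.mp hev
  refine ⟨max Y₀ 1, lt_of_lt_of_le one_pos (le_max_right _ _), ?_⟩
  intro y hy
  have hYy := hY₀ |y| (le_trans (le_max_left _ _) hy)
  have hy1 : (1:ℝ) ≤ |y| := hYy.1
  -- continuity of x ↦ L x s y t
  have hcontL : Continuous fun x : ℝ => L x s y t := by
    rw [continuous_iff_continuousAt]
    intro x
    have hU : IsOpen {p : ℝ × ℝ × ℝ × ℝ | p.2.1 < p.2.2.2} :=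
      isOpen_lt (by fun_prop) (by fun_prop)
    have hmem : ((x, s, y, t) : ℝ × ℝ × ℝ × ℝ) ∈ {p : ℝ × ℝ × ℝ × ℝ | p.2.1 < p.2.2.2} := ht
    have hca : ContinuousAt (fun p : ℝ × ℝ × ℝ × ℝ => L p.1 p.2.1 p.2.2.1 p.2.2.2) (x, s, y, t) :=
      hLcont.continuousAt (hU.mem_nhds hmem)
    have hmap : Continuous fun x : ℝ => ((x, s, y, t) : ℝ × ℝ × ℝ × ℝ) := by fun_prop
    exact ContinuousAt.comp (g := fun p : ℝ × ℝ × ℝ × ℝ => L p.1 p.2.1 p.2.2.1 p.2.2.2)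
      (f := fun x : ℝ => ((x, s, y, t) : ℝ × ℝ × ℝ × ℝ)) hca hmap.continuousAt
  have hf : Continuous fun x : ℝ => h x + L x s y t := hh.add hcontL
  -- upper bound for f leading to tendsto atBot
  have hub : ∀ x : ℝ, h x + L x s y t ≤
      (a + P + Q*|y|) + (b+Q)*|x| - (|x| - |y|) ^ 2 / τ := by
    intro x
    have hEx := abs_le.mp (hE x y)
    have hhx := abs_le.mp (hgrowth x)
    have hdiv : (|x| - |y|) ^ 2 / τ ≤ (x - y) ^ 2 / τ := by
      have := aux_abs_sq x y
      gcongr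
    linarith [hEx.2, hhx.2]
  have hψ : Filter.Tendsto (fun v : ℝ => (v - |y|) * ((v - |y|)/τ - (b+Q)))
      Filter.atTop Filter.atTop := by
    have hw : Filter.Tendsto (fun v : ℝ => v - |y|) Filter.atTop Filter.atTop :=
      (Filter.tendsto_atTop_add_const_right Filter.atTop (-|y|) Filter.tendsto_id).congr
        (fun v => by simp only [id_eq]; ring)
    apply Filter.Tendsto.atTop_mul_atTop₀ hw
    have hw2 : Filter.Tendsto (fun v : ℝ => (v - |y|)/τ) Filter.atTop Filter.atTop :=
      hw.atTop_div_const hτ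
    exact (Filter.tendsto_atTop_add_const_right Filter.atTop (-(b+Q)) hw2).congr
      (fun v => by ring)
  have hφ : Filter.Tendsto (fun v : ℝ => (a + P + Q*|y|) + (b+Q)*v - (v - |y|) ^ 2 / τ)
      Filter.atTop Filter.atBot := by
    have h1 := Filter.tendsto_neg_atTop_atBot.comp hψ
    have h2 := Filter.tendsto_atBot_add_const_right Filter.atTop
      ((b+Q)*|y| + (a + P + Q*|y|)) h1
    refine h2.congr fun v => ?_
    simp only [Function.comp_apply]
    ring
  have habs : Filter.Tendsto (fun x : ℝ => |x|) (Filter.cocompact ℝ) Filter.atTop := by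
    exact tendsto_norm_cocompact_atTop (E := ℝ)
  have hcomp : Filter.Tendsto (fun x : ℝ => (a + P + Q*|y|) + (b+Q)*|x| - (|x| - |y|) ^ 2 / τ)
      (Filter.cocompact ℝ) Filter.atBot := hφ.comp habs
  have hfbot : Filter.Tendsto (fun x : ℝ => h x + L x s y t) (Filter.cocompact ℝ)
      Filter.atBot := Filter.tendsto_atBot_mono hub hcomp
  obtain ⟨x₀, hx₀⟩ := hf.exists_forall_ge hfbot
  constructor
  · exact ⟨x₀, hx₀⟩
  · intro x hx
    have hd := hdist y hy1 x hx
    rw [Real.sqrt_eq_rpow] at hd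
    have hlt : |x - y| < |y| ^ ((1:ℝ)/2 + δ) := lt_of_le_of_lt hd hYy.2
    have := abs_lt.mp hlt
    exact ⟨by linarith [this.1], by linarith [this.2]⟩
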